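/- With σ and ε as above: 45u − 25w ∈ σ and 45u + 126w ∈ ε(σ), and (45u − 25w) − (45u + 126w) = −151w. Consequently, −w ∈ (σ − ε(σ)) ∩ (ε(σ) − ε²(σ)) ∩ (ε²(σ) − σ), where for cones C, C' the set C − C' denotes {x − y : x ∈ C, y ∈ C'}. -/

import Mathlib

open Pointwise

/-- The cone generated by a finite family of vectors: all nonnegative
rational linear combinations of the `g i`. -/
def coneGen {V : Type*} [AddCommGroup V] [Module ℚ V] {n : ℕ} (g : Fin n → V) : Set V :=
  {x | ∃ c : Fin n → ℚ, (∀ i, 0 ≤ c i) ∧ x = ∑ i, c i • g i}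

/-- A set is a cone if it is the cone generated by some finite family of vectors. -/
def IsCone {V : Type*} [AddCommGroup V] [Module ℚ V] (C : Set V) : Prop :=
  ∃ (n : ℕ) (g : Fin n → V), C = coneGen g

/-- `F` is a face of the cone `C` if `F = C ∩ l⁻¹(0)` for some linear form `l`
nonnegative on `C`. -/
def IsFaceOf {V : Type*} [AddCommGroup V] [Module ℚ V] (F C : Set V) : Prop :=
  ∃ l : V →ₗ[ℚ] ℚ, (∀ x ∈ C, 0 ≤ l x) ∧ F = C ∩ {x | l x = 0}

/-- A fan: a finite collection of strictly convex cones, closed under taking faces,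
such that the intersection of any two of its cones is a face of each. -/
def IsFan {V : Type*} [AddCommGroup V] [Module ℚ V] (S : Set (Set V)) : Prop :=
  S.Finite ∧
  (∀ C ∈ S, IsCone C ∧ C ∩ (-C) = ({0} : Set V)) ∧
  (∀ C ∈ S, ∀ F : Set V, IsFaceOf F C → F ∈ S) ∧
  (∀ C ∈ S, ∀ C' ∈ S, IsFaceOf (C ∩ C') C ∧ IsFaceOf (C ∩ C') C')

/-- A cone of the collection `S` is maximal if it is not strictly contained in
another cone of `S`. -/
def IsMaximalIn {V : Type*} [AddCommGroup V] [Module ℚ V] (S : Set (Set V)) (C : Set V) : Prop :=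
  C ∈ S ∧ ∀ C' ∈ S, C ⊆ C' → C' = C

/-- A fan is quasi-projective if there is a family of linear forms indexed by its
maximal cones which agree on pairwise intersections and satisfy the strict
inequality condition. -/
def IsQuasiProjectiveFan {V : Type*} [AddCommGroup V] [Module ℚ V] (S : Set (Set V)) : Prop :=
  ∃ l : Set V → (V →ₗ[ℚ] ℚ),
    (∀ C, IsMaximalIn S C → ∀ C', IsMaximalIn S C' → ∀ x ∈ C ∩ C', l C x = l C' x) ∧
    (∀ C, IsMaximalIn S C → ∀ C', IsMaximalIn S C' → C ≠ C' →
      ∀ x ∈ C, x ∉ C' → l C' x < l C x)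

/-- The generators `5u+v−5w`, `−5u−5v+14w`, `4u−v` of the cone `σ`. -/
def genS : Fin 3 → (Fin 3 → ℚ) := ![![5, 1, -5], ![-5, -5, 14], ![4, -1, 0]]

/-- The cone `σ = Cone(5u+v−5w, −5u−5v+14w, 4u−v)` in `ℚ³`. -/
def coneSigma : Set (Fin 3 → ℚ) := coneGen genS

/-- The matrix of `ε` in the standard basis `(u, v, w)`:
`ε(u) = v`, `ε(v) = −u−v`, `ε(w) = w`. -/
def epsMat : Matrix (Fin 3) (Fin 3) ℚ := ![![0, -1, 0], ![1, -1, 0], ![0, 0, 1]]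

/-- The linear automorphism `ε : ℚ³ → ℚ³`. -/
def eps : (Fin 3 → ℚ) →ₗ[ℚ] (Fin 3 → ℚ) := Matrix.toLin' epsMat

/-- `45u − 25w ∈ σ`, `45u + 126w ∈ ε(σ)`,
`(45u − 25w) − (45u + 126w) = −151w`, and consequently
`−w ∈ (σ − ε(σ)) ∩ (ε(σ) − ε²(σ)) ∩ (ε²(σ) − σ)`, where `C − C'` is the
pointwise difference `{x − y : x ∈ C, y ∈ C'}`. -/
lemma mem_sigma (x : Fin 3 → ℚ) (c : Fin 3 → ℚ) (h0 : ∀ i, 0 ≤ c i)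
    (h : x = c 0 • genS 0 + c 1 • genS 1 + c 2 • genS 2) : x ∈ coneSigma := by
  exact ⟨c, h0, by simpa [Fin.sum_univ_three] using h⟩

lemma eps_apply (x : Fin 3 → ℚ) : eps x = ![-(x 1), x 0 - x 1, x 2] := by
  funext i
  rw [eps, Matrix.toLin'_apply]
  simp [eps, epsMat, Matrix.toLin'_apply, Matrix.mulVec, dotProduct, Fin.sum_univ_three]
  fin_cases i <;> simp <;> ring

theorem neg_w_mem_differences :
    (![45, 0, -25] : Fin 3 → ℚ) ∈ coneSigma ∧
    (![45, 0, 126] : Fin 3 → ℚ) ∈ ⇑eps '' coneSigma ∧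
    (![45, 0, -25] - ![45, 0, 126] : Fin 3 → ℚ) = ![0, 0, -151] ∧
    (![0, 0, -1] : Fin 3 → ℚ) ∈
      (coneSigma - ⇑eps '' coneSigma) ∩
      ((⇑eps '' coneSigma) - ⇑eps '' (⇑eps '' coneSigma)) ∩
      ((⇑eps '' (⇑eps '' coneSigma)) - coneSigma) := by
  have hx0 : (![45/151, 0, -25/151] : Fin 3 → ℚ) ∈ coneSigma := by
    apply mem_sigma _ ![5/151, 0, 5/151]
    · intro i; fin_cases i <;> norm_num
    · funext i; fin_cases i <;> simp [genS] <;> norm_num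
  have hz0 : (![-45/151, -45/151, 126/151] : Fin 3 → ℚ) ∈ coneSigma := by
    apply mem_sigma _ ![0, 9/151, 0]
    · intro i; fin_cases i <;> norm_num
    · funext i; fin_cases i <;> simp [genS] <;> norm_num
  refine ⟨?_, ?_, ?_, ?_⟩
  · apply mem_sigma _ ![5, 0, 5]
    · intro i; fin_cases i <;> norm_num
    · funext i; fin_cases i <;> simp [genS] <;> norm_num
  · refine ⟨![-45, -45, 126], ?_, ?_⟩
    · apply mem_sigma _ ![0, 9, 0]
      · intro i; fin_cases i <;> norm_num
      · funext i; fin_cases i <;> simp [genS] <;> norm_num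
    · rw [eps_apply]; funext i; fin_cases i <;> norm_num [Matrix.cons_val_two]
  · funext i; fin_cases i <;> norm_num
  · refine ⟨⟨?_, ?_⟩, ?_⟩
    · exact Set.mem_sub.2 ⟨_, hx0, _, ⟨_, hz0, rfl⟩, by
        rw [eps_apply]; funext i; fin_cases i <;> norm_num [Matrix.cons_val_two]⟩
    · exact Set.mem_sub.2 ⟨_, ⟨_, hx0, rfl⟩, _, ⟨_, ⟨_, hz0, rfl⟩, rfl⟩, by
        simp only [eps_apply]; funext i; fin_cases i <;> norm_num [Matrix.cons_val_two]⟩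
    · exact Set.mem_sub.2 ⟨_, ⟨_, ⟨_, hx0, rfl⟩, rfl⟩, _, hz0, by
        simp only [eps_apply]; funext i; fin_cases i <;> norm_num [Matrix.cons_val_two]⟩
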